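/- arXiv:0911.2384 — 6 statements merged into one kernel-verified Lean document; each statement's English description precedes it below -/
import Mathlib

section
/- The maximum number of non-attacking brooks that can be placed on a triangular board of width w is ⌊(2w+1)/3⌋. Here a triangular board of width w is the set of cells (x,y) in ℤ² with 1 ≤ x, 1 ≤ y, and x + y ≤ w + 1, and a set of brooks is non-attacking if no two of its cells share an x-coordinate, share a y-coordinate, or share the value x + y (i.e., lie on the same North-East to South-West diagonal). -/
private lemma sum_lb (T : Finset ℤ) (a : ℤ) (h : ∀ t ∈ T, a ≤ t) :
    (T.card : ℤ) * (2 * a + T.card - 1) ≤ 2 * ∑ t ∈ T, t := by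
  induction T using Finset.strongInduction generalizing a with
  | _ T ih =>
    rcases T.eq_empty_or_nonempty with rfl | hne
    · simp
    · have hmem := T.min'_mem hne
      have hsub : T.erase (T.min' hne) ⊂ T := Finset.erase_ssubset hmem
      have h1 : ∀ t ∈ T.erase (T.min' hne), a + 1 ≤ t := by
        intro t ht
        have h2 := Finset.min'_le T t (Finset.mem_of_mem_erase ht)
        have h3 := (Finset.mem_erase.mp ht).1
        have h4 := h _ (Finset.mem_of_mem_erase ht)
        have h5 := h _ hmem
        omega
      have key := ih _ hsub (a + 1) h1
      have hcardpos : 0 < T.card := Finset.card_pos.mpr hne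
      have hcard : (T.erase (T.min' hne)).card = T.card - 1 :=
        Finset.card_erase_of_mem hmem
      have hsum : T.min' hne + ∑ t ∈ T.erase (T.min' hne), t = ∑ t ∈ T, t :=
        Finset.add_sum_erase T id hmem
      have hmin : a ≤ T.min' hne := h _ hmem
      rw [hcard] at key
      have hc : ((T.card - 1 : ℕ) : ℤ) = (T.card : ℤ) - 1 := by
        push_cast [hcardpos]; omega
      rw [hc] at key
      nlinarith [key, hmin, hsum]

private lemma sum_ub (T : Finset ℤ) (b : ℤ) (h : ∀ t ∈ T, t ≤ b) :
    2 * ∑ t ∈ T, t ≤ (T.card : ℤ) * (2 * b - T.card + 1) := by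
  have h1 : ∀ t ∈ T.image (fun x => -x), -b ≤ t := by
    intro t ht
    obtain ⟨x, hx, rfl⟩ := Finset.mem_image.mp ht
    have := h x hx; omega
  have key := sum_lb _ _ h1
  have hcard : (T.image (fun x => -x)).card = T.card :=
    Finset.card_image_of_injective _ neg_injective
  have hsum : ∑ t ∈ T.image (fun x => -x), t = -∑ t ∈ T, t := by
    rw [Finset.sum_image (by intro x _ y _ hxy; exact neg_injective hxy)]
    rw [Finset.sum_neg_distrib]
  rw [hcard, hsum] at key
  nlinarith [key]

private def brookF (n k : ℕ) (i : ℕ) : ℤ × ℤ :=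
  ((i : ℤ) + 1,
    if n % 2 = 1 then
      (if i ≤ k then (i : ℤ) + k + 1 else (i : ℤ) - k)
    else
      (if i = 0 then 1 else if i ≤ k then (i : ℤ) + k else (i : ℤ) + 1 - k))

/-- The maximum number of non-attacking brooks on a triangular board of width `w`
is `⌊(2w+1)/3⌋`. -/
theorem brooks_max (w : ℕ) (hw : 0 < w) :
    IsGreatest {n : ℕ | ∃ S : Finset (ℤ × ℤ),
      S.card = n ∧
      (∀ p ∈ S, 1 ≤ p.1 ∧ 1 ≤ p.2 ∧ p.1 + p.2 ≤ (w : ℤ) + 1) ∧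
      Set.InjOn (fun p : ℤ × ℤ => p.1) ↑S ∧
      Set.InjOn (fun p : ℤ × ℤ => p.2) ↑S ∧
      Set.InjOn (fun p : ℤ × ℤ => p.1 + p.2) ↑S}
    ((2 * w + 1) / 3) := by
  constructor
  · -- membership: explicit construction
    set n := (2 * w + 1) / 3 with hn
    set k := n / 2 with hk
    have hn3 : 3 * n ≤ 2 * w + 1 := by omega
    have hnpos : 1 ≤ n := by omega
    classical
    set f : ℕ → ℤ × ℤ := brookF n k with hf
    have hfinj : ∀ i < n, ∀ j < n, f i = f j → i = j := by
      intro i _ j _ hij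
      have := congrArg Prod.fst hij
      simp only [hf, brookF] at this
      omega
    refine ⟨(Finset.range n).image f, ?_, ?_, ?_, ?_, ?_⟩
    · rw [Finset.card_image_of_injOn, Finset.card_range]
      intro i hi j hj
      exact hfinj i (Finset.mem_range.mp (Finset.mem_coe.mp hi)) j
        (Finset.mem_range.mp (Finset.mem_coe.mp hj))
    · intro p hp
      obtain ⟨i, hi, rfl⟩ := Finset.mem_image.mp hp
      rw [Finset.mem_range] at hi
      simp only [hf, brookF]
      have : n = 2 * k ∨ n = 2 * k + 1 := by omega
      split_ifs <;> refine ⟨by omega, by omega, by omega⟩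
    · intro p hp q hq hpq
      obtain ⟨i, hi, rfl⟩ := Finset.mem_image.mp (Finset.mem_coe.mp hp)
      obtain ⟨j, hj, rfl⟩ := Finset.mem_image.mp (Finset.mem_coe.mp hq)
      rw [Finset.mem_range] at hi hj
      have : i = j := by
        simp only [hf, brookF] at hpq; omega
      rw [this]
    · intro p hp q hq hpq
      obtain ⟨i, hi, rfl⟩ := Finset.mem_image.mp (Finset.mem_coe.mp hp)
      obtain ⟨j, hj, rfl⟩ := Finset.mem_image.mp (Finset.mem_coe.mp hq)
      rw [Finset.mem_range] at hi hj
      have hij : i = j := by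
        simp only [hf, brookF] at hpq
        have : n = 2 * k ∨ n = 2 * k + 1 := by omega
        split_ifs at hpq <;> omega
      rw [hij]
    · intro p hp q hq hpq
      obtain ⟨i, hi, rfl⟩ := Finset.mem_image.mp (Finset.mem_coe.mp hp)
      obtain ⟨j, hj, rfl⟩ := Finset.mem_image.mp (Finset.mem_coe.mp hq)
      rw [Finset.mem_range] at hi hj
      have hij : i = j := by
        simp only [hf, brookF] at hpq
        have : n = 2 * k ∨ n = 2 * k + 1 := by omega
        split_ifs at hpq <;> omega
      rw [hij]
  · -- upper bound
    rintro n ⟨S, hcard, hbound, hx, hy, hd⟩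
    rcases Nat.eq_zero_or_pos n with rfl | hnpos
    · omega
    have hXcard : (S.image Prod.fst).card = n := by
      rw [Finset.card_image_of_injOn hx, hcard]
    have hYcard : (S.image Prod.snd).card = n := by
      rw [Finset.card_image_of_injOn hy, hcard]
    have hDcard : (S.image (fun p => p.1 + p.2)).card = n := by
      rw [Finset.card_image_of_injOn hd, hcard]
    have hXlb := sum_lb (S.image Prod.fst) 1 (by
      intro t ht
      obtain ⟨p, hp, rfl⟩ := Finset.mem_image.mp ht
      exact (hbound p hp).1)
    have hYlb := sum_lb (S.image Prod.snd) 1 (by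
      intro t ht
      obtain ⟨p, hp, rfl⟩ := Finset.mem_image.mp ht
      exact (hbound p hp).2.1)
    have hDub := sum_ub (S.image (fun p => p.1 + p.2)) ((w : ℤ) + 1) (by
      intro t ht
      obtain ⟨p, hp, rfl⟩ := Finset.mem_image.mp ht
      exact (hbound p hp).2.2)
    rw [hXcard] at hXlb
    rw [hYcard] at hYlb
    rw [hDcard] at hDub
    have hXsum : ∑ t ∈ S.image Prod.fst, t = ∑ p ∈ S, p.1 :=
      by
      apply Finset.sum_image; intro a ha b hb hab; exact hx ha hb hab
    have hYsum : ∑ t ∈ S.image Prod.snd, t = ∑ p ∈ S, p.2 :=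
      by
      apply Finset.sum_image; intro a ha b hb hab; exact hy ha hb hab
    have hDsum : ∑ t ∈ S.image (fun p => p.1 + p.2), t = ∑ p ∈ S, (p.1 + p.2) :=
      by
      apply Finset.sum_image; intro a ha b hb hab; exact hd ha hb hab
    have hsplit : ∑ p ∈ S, (p.1 + p.2) = ∑ p ∈ S, p.1 + ∑ p ∈ S, p.2 :=
      Finset.sum_add_distrib
    rw [hXsum] at hXlb
    rw [hYsum] at hYlb
    rw [hDsum, hsplit] at hDub
    have hc : (1 : ℤ) ≤ (n : ℤ) := by exact_mod_cast hnpos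
    have key : 3 * (n : ℤ) ≤ 2 * (w : ℤ) + 1 := by nlinarith [hXlb, hYlb, hDub, hc]
    have : 3 * n ≤ 2 * w + 1 := by exact_mod_cast key
    omega
end

section
/- For every positive integer w, there exists a set of ⌊(2w+1)/3⌋ non-attacking brooks on the triangular board of width w, i.e., a set S of that cardinality inside {(x,y) ∈ ℤ² : 1 ≤ x, 1 ≤ y, x+y ≤ w+1} on which the maps x, y, and x+y are all injective. -/
/-- There exists a set of `⌊(2w+1)/3⌋` non-attacking brooks on the
triangular board of width `w`, for every positive integer `w`. -/
theorem brooks_lower_bound (w : ℕ) (hw : 0 < w) :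
    ∃ S : Finset (ℤ × ℤ),
      S.card = (2 * w + 1) / 3 ∧
      (∀ p ∈ S, 1 ≤ p.1 ∧ 1 ≤ p.2 ∧ p.1 + p.2 ≤ (w : ℤ) + 1) ∧
      Set.InjOn (fun p : ℤ × ℤ => p.1) ↑S ∧
      Set.InjOn (fun p : ℤ × ℤ => p.2) ↑S ∧
      Set.InjOn (fun p : ℤ × ℤ => p.1 + p.2) ↑S := by
  classical
  set m : ℕ := if w % 3 = 0 then w / 3 else w / 3 + 1 with hm
  set c : ℕ := if w % 3 = 0 then w / 3 + 2 else w / 3 + 1 with hc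
  set n : ℕ := if w % 3 = 0 then 2 * (w / 3) else 2 * (w / 3) + 1 with hn
  have hn3 : n = (2 * w + 1) / 3 := by
    by_cases h : w % 3 = 0 <;> simp only [hn, h, if_true, if_false] <;> omega
  set f : ℕ → ℤ × ℤ := fun k =>
    ((k : ℤ) + 1, if k < m then (k : ℤ) + c else (k : ℤ) + 1 - m) with hf
  refine ⟨(Finset.range n).image f, ?_, ?_, ?_, ?_, ?_⟩
  · rw [← hn3, Finset.card_image_of_injective _ ?_, Finset.card_range]
    intro a b hab
    have : (a : ℤ) + 1 = (b : ℤ) + 1 := congrArg Prod.fst hab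
    exact_mod_cast by omega
  · intro p hp
    simp only [Finset.mem_image, Finset.mem_range] at hp
    obtain ⟨k, hk, rfl⟩ := hp
    simp only [hf]
    by_cases hkm : k < m <;> simp only [hkm, if_pos, if_neg, if_true, if_false] <;>
      refine ⟨by push_cast; omega, ?_, ?_⟩ <;> push_cast <;>
      by_cases h : w % 3 = 0 <;> simp only [hm, hc, hn, h, if_true, if_false] at hk hkm ⊢ <;> omega
  · intro p hp q hq hpq
    simp only [Finset.coe_image, Finset.coe_range, Set.mem_image, Set.mem_Iio] at hp hq
    obtain ⟨a, ha, rfl⟩ := hp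
    obtain ⟨b, hb, rfl⟩ := hq
    simp only [hf] at hpq ⊢
    have : a = b := by exact_mod_cast by push_cast at hpq; omega
    subst this; rfl
  · intro p hp q hq hpq
    simp only [Finset.coe_image, Finset.coe_range, Set.mem_image, Set.mem_Iio] at hp hq
    obtain ⟨a, ha, rfl⟩ := hp
    obtain ⟨b, hb, rfl⟩ := hq
    simp only [hf] at hpq ⊢
    have : a = b := by
      by_cases h1 : a < m <;> by_cases h2 : b < m <;>
        simp only [h1, h2, if_pos, if_neg, if_true, if_false] at hpq <;>
        by_cases h : w % 3 = 0 <;> simp only [hm, hc, hn, h, if_true, if_false] at h1 h2 ha hb hpq <;>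
        push_cast at hpq <;> omega
    subst this; rfl
  · intro p hp q hq hpq
    simp only [Finset.coe_image, Finset.coe_range, Set.mem_image, Set.mem_Iio] at hp hq
    obtain ⟨a, ha, rfl⟩ := hp
    obtain ⟨b, hb, rfl⟩ := hq
    simp only [hf] at hpq ⊢
    have : a = b := by
      by_cases h1 : a < m <;> by_cases h2 : b < m <;>
        simp only [h1, h2, if_pos, if_neg, if_true, if_false] at hpq <;>
        by_cases h : w % 3 = 0 <;> simp only [hm, hc, hn, h, if_true, if_false] at h1 h2 ha hb hpq <;>
        push_cast at hpq <;> omega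
    subst this; rfl
end

section
/- If n is a positive integer and S ⊆ ℤ² is a set of n points such that the first coordinates of S are n consecutive integers with each value attained exactly once, the second coordinates of S are n consecutive integers with each value attained exactly once, and the coordinate-sums x+y of S are n consecutive integers with each value attained exactly once, then n is odd. -/
/-- The sum of `f` over `S` equals the sum over `I` when each value in `I` is
attained exactly once and the cardinalities match. -/
lemma sum_eq_of_unique (S : Finset (ℤ × ℤ)) (f : ℤ × ℤ → ℤ) (I : Finset ℤ)
    (hc : S.card = I.card) (h : ∀ k ∈ I, ∃! p, p ∈ S ∧ f p = k) :
    ∑ p ∈ S, f p = ∑ k ∈ I, k := by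
  classical
  let g : {k // k ∈ I} → ℤ × ℤ := fun k => (h k k.2).choose
  have hg : ∀ k : {k // k ∈ I}, g k ∈ S ∧ f (g k) = k := fun k => (h k k.2).choose_spec.1
  have hinj : Function.Injective g := by
    intro k l he
    ext
    rw [← (hg k).2, ← (hg l).2, he]
  have hsub : I.attach.image g ⊆ S := by
    intro p hp
    simp only [Finset.mem_image] at hp
    obtain ⟨k, _, rfl⟩ := hp
    exact (hg k).1
  have hcard2 : (I.attach.image g).card = S.card := by
    rw [Finset.card_image_of_injective _ hinj, Finset.card_attach, hc]
  have heq : I.attach.image g = S := Finset.eq_of_subset_of_card_le hsub hcard2.ge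
  rw [← heq, Finset.sum_image (fun x _ y _ h => hinj h)]
  have hcongr : ∀ k ∈ I.attach, f (g k) = (k : ℤ) := fun k _ => (hg k).2
  rw [Finset.sum_congr rfl hcongr]
  exact Finset.sum_attach I id

lemma sum_Icc_shift (n : ℕ) (a : ℤ) :
    ∑ k ∈ Finset.Icc a (a + n - 1), k = n * a + ∑ i ∈ Finset.range n, (i : ℤ) := by
  have key : ∑ k ∈ Finset.Icc a (a + n - 1), k = ∑ i ∈ Finset.range n, (a + (i : ℤ)) := by
    apply Finset.sum_nbij' (i := fun k => (k - a).toNat) (j := fun i => a + (i : ℤ))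
    · intro k hk
      simp only [Finset.mem_Icc] at hk
      simp only [Finset.mem_range]
      omega
    · intro i hi
      simp only [Finset.mem_range] at hi
      simp only [Finset.mem_Icc]
      omega
    · intro k hk
      simp only [Finset.mem_Icc] at hk
      omega
    · intro i _
      omega
    · intro k hk
      simp only [Finset.mem_Icc] at hk
      omega
  rw [key, Finset.sum_add_distrib, Finset.sum_const, Finset.card_range, nsmul_eq_mul]

/-- If the `x`-coordinates, `y`-coordinates, and coordinate-sums of a set of `n`
points in `ℤ²` each form `n` consecutive integers, each attained exactly once,
then `n` is odd. -/
theorem hexagonal_permutation_odd (n : ℕ) (hn : 0 < n) (S : Finset (ℤ × ℤ))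
    (hcard : S.card = n)
    (hx : ∃ a : ℤ, ∀ k ∈ Finset.Icc a (a + n - 1), ∃! p, p ∈ S ∧ p.1 = k)
    (hy : ∃ b : ℤ, ∀ k ∈ Finset.Icc b (b + n - 1), ∃! p, p ∈ S ∧ p.2 = k)
    (hd : ∃ c : ℤ, ∀ k ∈ Finset.Icc c (c + n - 1), ∃! p, p ∈ S ∧ p.1 + p.2 = k) :
    Odd n := by
  obtain ⟨a, ha⟩ := hx
  obtain ⟨b, hb⟩ := hy
  obtain ⟨c, hc⟩ := hd
  have hcardI : ∀ t : ℤ, S.card = (Finset.Icc t (t + n - 1)).card := by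
    intro t
    rw [Int.card_Icc, hcard]
    omega
  have h1 := sum_eq_of_unique S (fun p => p.1) _ (hcardI a) ha
  have h2 := sum_eq_of_unique S (fun p => p.2) _ (hcardI b) hb
  have h3 := sum_eq_of_unique S (fun p => p.1 + p.2) _ (hcardI c) hc
  have hsum : (∑ p ∈ S, p.1) + (∑ p ∈ S, p.2) = ∑ p ∈ S, (p.1 + p.2) :=
    (Finset.sum_add_distrib).symm
  rw [h1, h2, h3, sum_Icc_shift n a, sum_Icc_shift n b, sum_Icc_shift n c] at hsum
  have hT : (∑ i ∈ Finset.range n, (i : ℤ)) * 2 = n * (n - 1) := by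
    have hnat := Finset.sum_range_id_mul_two n
    have hcast : ((∑ i ∈ Finset.range n, i : ℕ) : ℤ) = ∑ i ∈ Finset.range n, (i : ℤ) := by
      push_cast
      rfl
    have h1 : ((∑ i ∈ Finset.range n, i : ℕ) : ℤ) * 2 = ((n * (n - 1) : ℕ) : ℤ) :=
      mod_cast congrArg (Nat.cast : ℕ → ℤ) hnat
    rw [hcast, Nat.cast_mul, Nat.cast_sub hn] at h1
    simpa using h1
  have key : (n : ℤ) * (a + b - c) * 2 + (n : ℤ) * ((n : ℤ) - 1) = 0 := by linarith
  have hkey2 : (n : ℤ) * ((a + b - c) * 2 + (n : ℤ) - 1) = 0 := by ring_nf; ring_nf at key; linarith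
  have hn' : (n : ℤ) ≠ 0 := by exact_mod_cast hn.ne'
  have hfin : (a + b - c) * 2 + (n : ℤ) - 1 = 0 := by
    rcases mul_eq_zero.mp hkey2 with h | h
    · exact absurd h hn'
    · exact h
  rw [Nat.odd_iff]
  omega
end

section
/- Let n be a positive integer and let S ⊆ ℤ² be a set of n points occupying (after translation, assume) columns 1,…,n with one point per column, rows 1,…,n with one point per row, and diagonals x+y = c+1, …, c+n for some integer c with one point per diagonal. Then n is odd and c = (n+1)/2; equivalently, S is contained in the region {(x,y) : 1 ≤ x ≤ n, 1 ≤ y ≤ n, (n+1)/2 + 1 ≤ x+y ≤ (n+1)/2 + n}, which is the image under ξ of a Lee sphere of radius (n−1)/2. -/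
/-- If each value in `Icc a b` is attained by exactly one element of `S` under `f`,
and the cardinalities match, then `f` maps all of `S` into `Icc a b`. -/
lemma aux_mem_of_unique {S : Finset (ℤ × ℤ)} {f : ℤ × ℤ → ℤ} {a b : ℤ}
    (hcard : (Finset.Icc a b).card = S.card)
    (h : ∀ k ∈ Finset.Icc a b, ∃! p, p ∈ S ∧ f p = k) :
    ∀ p ∈ S, f p ∈ Finset.Icc a b := by
  classical
  set T := S.filter (fun p => f p ∈ Finset.Icc a b) with hT
  have hcardT : T.card = (Finset.Icc a b).card := by
    apply Finset.card_bij (fun p _ => f p)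
    · intro p hp
      exact (Finset.mem_filter.mp hp).2
    · intro p hp q hq hfq
      have hp' := Finset.mem_filter.mp hp
      have hq' := Finset.mem_filter.mp hq
      obtain ⟨r, hr, hr2⟩ := h (f q) hq'.2
      exact (hr2 p ⟨hp'.1, hfq⟩).trans (hr2 q ⟨hq'.1, rfl⟩).symm
    · intro k hk
      obtain ⟨p, ⟨hpS, hpf⟩, _⟩ := h k hk
      exact ⟨p, Finset.mem_filter.mpr ⟨hpS, hpf ▸ hk⟩, hpf⟩
  have hTS : T = S := by
    apply Finset.eq_of_subset_of_card_le (Finset.filter_subset _ _)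
    exact le_of_eq (hcard.symm.trans hcardT.symm)
  intro p hp
  rw [← hTS] at hp
  exact (Finset.mem_filter.mp hp).2

/-- Under the same hypotheses, summing `f` over `S` gives the sum of `Icc a b`. -/
lemma aux_sum_of_unique {S : Finset (ℤ × ℤ)} {f : ℤ × ℤ → ℤ} {a b : ℤ}
    (hcard : (Finset.Icc a b).card = S.card)
    (h : ∀ k ∈ Finset.Icc a b, ∃! p, p ∈ S ∧ f p = k) :
    ∑ p ∈ S, f p = ∑ k ∈ Finset.Icc a b, k := by
  apply Finset.sum_bij (fun p _ => f p)
  · exact aux_mem_of_unique hcard h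
  · intro p hp q hq hfq
    have hk := aux_mem_of_unique hcard h q hq
    obtain ⟨r, hr, hr2⟩ := h (f q) hk
    exact (hr2 p ⟨hp, hfq⟩).trans (hr2 q ⟨hq, rfl⟩).symm
  · intro k hk
    obtain ⟨p, ⟨hpS, hpf⟩, _⟩ := h k hk
    exact ⟨p, hpS, hpf⟩
  · intro p _; rfl

lemma aux_gauss (n : ℕ) : 2 * ∑ k ∈ Finset.Icc (1 : ℤ) n, k = n * (n + 1) := by
  induction n with
  | zero => simp
  | succ m ih =>
    have hins : Finset.Icc (1 : ℤ) ((m : ℤ) + 1)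
        = insert ((m : ℤ) + 1) (Finset.Icc (1 : ℤ) m) := by
      ext x
      simp only [Finset.mem_Icc, Finset.mem_insert]
      omega
    rw [show ((m + 1 : ℕ) : ℤ) = (m : ℤ) + 1 by push_cast; ring, hins,
      Finset.sum_insert (by simp)]
    have : 2 * (((m : ℤ) + 1) + ∑ k ∈ Finset.Icc (1 : ℤ) m, k)
        = 2 * ((m : ℤ) + 1) + 2 * ∑ k ∈ Finset.Icc (1 : ℤ) m, k := by ring
    rw [this, ih]
    ring

/-- A hexagonal permutation occupying columns `1,…,n`, rows `1,…,n` and diagonals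
`x+y = c+1,…,c+n` forces `n` odd and `c = (n+1)/2`, and the dots lie in the image
of a Lee sphere of radius `(n-1)/2`. -/
theorem hexagonal_permutation_lee_sphere (n : ℕ) (hn : 0 < n) (c : ℤ)
    (S : Finset (ℤ × ℤ)) (hcard : S.card = n)
    (hx : ∀ k ∈ Finset.Icc (1 : ℤ) n, ∃! p, p ∈ S ∧ p.1 = k)
    (hy : ∀ k ∈ Finset.Icc (1 : ℤ) n, ∃! p, p ∈ S ∧ p.2 = k)
    (hd : ∀ k ∈ Finset.Icc (c + 1) (c + n), ∃! p, p ∈ S ∧ p.1 + p.2 = k) :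
    Odd n ∧ 2 * c = n + 1 ∧
      ∀ p ∈ S, 1 ≤ p.1 ∧ p.1 ≤ n ∧ 1 ≤ p.2 ∧ p.2 ≤ n ∧
        c + 1 ≤ p.1 + p.2 ∧ p.1 + p.2 ≤ c + n := by
  have hcard1 : (Finset.Icc (1 : ℤ) n).card = S.card := by
    rw [Int.card_Icc, hcard]; omega
  have hcardd : (Finset.Icc (c + 1) (c + n)).card = S.card := by
    rw [Int.card_Icc, hcard]; omega
  have hsx := aux_sum_of_unique hcard1 hx
  have hsy := aux_sum_of_unique hcard1 hy
  have hsd := aux_sum_of_unique hcardd hd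
  -- shift the diagonal sum
  have hshift : ∑ k ∈ Finset.Icc (c + 1) (c + n), k
      = (n : ℤ) * c + ∑ k ∈ Finset.Icc (1 : ℤ) n, k := by
    have : Finset.Icc (c + 1) (c + n) = (Finset.Icc (1 : ℤ) n).map
        (addLeftEmbedding c) := by
      rw [Finset.map_add_left_Icc]
    rw [this, Finset.sum_map]
    simp only [addLeftEmbedding_apply]
    rw [Finset.sum_add_distrib, Finset.sum_const, Int.card_Icc]
    simp
  set A := ∑ k ∈ Finset.Icc (1 : ℤ) n, k with hA
  have hsum : ∑ p ∈ S, (p.1 + p.2) = A + A := by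
    rw [Finset.sum_add_distrib, hsx, hsy]
  have hnc : (n : ℤ) * c = A := by
    have := hsd
    rw [hsum, hshift] at this
    linarith
  have hgauss := aux_gauss n
  rw [← hA] at hgauss
  have hkey : (n : ℤ) * (2 * c) = (n : ℤ) * ((n : ℤ) + 1) := by
    rw [← hgauss]; ring_nf; linarith [hnc]
  have hn' : (n : ℤ) ≠ 0 := by exact_mod_cast hn.ne'
  have h2c : 2 * c = (n : ℤ) + 1 := mul_left_cancel₀ hn' hkey
  have hodd : Odd n := by
    rcases Int.even_or_odd (n : ℤ) with he | ho
    · exfalso; obtain ⟨m, hm⟩ := he; omega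
    · obtain ⟨m, hm⟩ := ho
      refine ⟨m.toNat, ?_⟩
      have : (0 : ℤ) ≤ m := by omega
      omega
  refine ⟨hodd, h2c, fun p hp => ?_⟩
  have h1 := aux_mem_of_unique hcard1 hx p hp
  have h2 := aux_mem_of_unique hcard1 hy p hp
  have h3 := aux_mem_of_unique hcardd hd p hp
  simp only [Finset.mem_Icc] at h1 h2 h3
  exact ⟨h1.1, h1.2, h2.1, h2.2, h3.1, h3.2⟩
end

section
/- There is no set S of n points in ℤ² with n even such that S has exactly one point in each of n consecutive columns, exactly one point in each of n consecutive rows, and exactly one point in each of n consecutive standard diagonals (lines x + y = constant). In particular, no honeycomb array has an even number of dots, and there is no hexagonal permutation whose dots fill a tricentred Lee sphere's 2r+2 rows in each direction. -/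
private lemma hex_sum_eq (n : ℕ) (S : Finset (ℤ × ℤ)) (f : ℤ × ℤ → ℤ) (a : ℤ)
    (hcard : S.card = n)
    (h : ∀ k ∈ Finset.Icc a (a + n - 1), ∃! p, p ∈ S ∧ f p = k) :
    ∑ p ∈ S, f p = ∑ k ∈ Finset.Icc a (a + n - 1), k := by
  classical
  have hIcc : (Finset.Icc a (a + (n : ℤ) - 1)).card = n := by
    rw [Int.card_Icc]; omega
  choose g hg1 hg2 using fun k hk => (h k hk).exists
  have hinj : ∀ k (hk : k ∈ Finset.Icc a (a + (n:ℤ) - 1)) k'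
      (hk' : k' ∈ Finset.Icc a (a + (n:ℤ) - 1)), g k hk = g k' hk' → k = k' := by
    intro k hk k' hk' heq
    have h1 := hg2 k hk
    have h2 := hg2 k' hk'
    rw [heq] at h1
    omega
  symm
  refine Finset.sum_bij (fun k hk => g k hk) (fun k hk => hg1 k hk) hinj ?_ ?_
  · intro p hp
    obtain ⟨k, hk, hpk⟩ := Finset.surj_on_of_inj_on_of_card_le (f := fun k hk => g k hk)
      (fun k hk => hg1 k hk) (fun k k2 hk hk2 => hinj k hk k2 hk2) (by omega) p hp
    exact ⟨k, hk, hpk.symm⟩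
  · intro k hk
    exact (hg2 k hk).symm

private lemma hex_gauss (a : ℤ) (n : ℕ) :
    2 * ∑ k ∈ Finset.Icc a (a + n - 1), k = n * (2 * a + n - 1) := by
  induction n with
  | zero =>
    have : Finset.Icc a (a + (0:ℕ) - 1) = ∅ := by
      apply Finset.Icc_eq_empty; push_cast; omega
    simp [this]
  | succ m ih =>
    have hins : Finset.Icc a (a + ((m : ℤ) + 1) - 1) =
        insert (a + m) (Finset.Icc a (a + m - 1)) := by
      ext k; simp [Finset.mem_Icc]; omega
    have hnot : (a + (m:ℤ)) ∉ Finset.Icc a (a + m - 1) := by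
      simp [Finset.mem_Icc]
    push_cast
    rw [hins, Finset.sum_insert hnot]
    push_cast at ih
    ring_nf
    ring_nf at ih
    omega

/-- There is no hexagonal permutation with an even number of dots: no set of `n`
points (with `n` even, `n > 0`) hits `n` consecutive columns, rows and standard
diagonals exactly once each. -/
theorem no_even_hexagonal_permutation (n : ℕ) (hpos : 0 < n) (hn : Even n) :
    ¬ ∃ (S : Finset (ℤ × ℤ)) (a b c : ℤ),
      S.card = n ∧
      (∀ k ∈ Finset.Icc a (a + n - 1), ∃! p, p ∈ S ∧ p.1 = k) ∧
      (∀ k ∈ Finset.Icc b (b + n - 1), ∃! p, p ∈ S ∧ p.2 = k) ∧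
      (∀ k ∈ Finset.Icc c (c + n - 1), ∃! p, p ∈ S ∧ p.1 + p.2 = k) := by
  rintro ⟨S, a, b, c, hcard, hA, hB, hC⟩
  have h1 := hex_sum_eq n S Prod.fst a hcard hA
  have h2 := hex_sum_eq n S Prod.snd b hcard hB
  have h3 := hex_sum_eq n S (fun p => p.1 + p.2) c hcard hC
  have hsplit : ∑ p ∈ S, (p.1 + p.2) = ∑ p ∈ S, p.1 + ∑ p ∈ S, p.2 :=
    Finset.sum_add_distrib
  have ga := hex_gauss a n
  have gb := hex_gauss b n
  have gc := hex_gauss c n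
  have key : (n : ℤ) * (2 * a + n - 1) + n * (2 * b + n - 1) = n * (2 * c + n - 1) := by
    rw [← ga, ← gb, ← gc, ← h1, ← h2, ← h3, hsplit]; ring
  obtain ⟨m, hm⟩ := hn
  have hne : (n : ℤ) ≠ 0 := by exact_mod_cast hpos.ne'
  have : 2 * a + n - 1 + (2 * b + n - 1) = 2 * c + n - 1 := by
    have := mul_left_cancel₀ hne (by linarith [key] : (n:ℤ) * ((2 * a + n - 1) + (2 * b + n - 1)) = n * (2 * c + n - 1))
    linarith
  have hmz : (n : ℤ) = 2 * m := by push_cast [hm]; ring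
  omega
end

section
/- If a honeycomb array (in square-grid coordinates) with n dots exists, then n is odd and, after translation, the dots form a Costas array of order n that is additionally contained in S_{(n−1)/2}(n) = {(x,y) : 1 ≤ x,y ≤ n, (n+3)/2 ≤ x+y ≤ (3n+1)/2}, with exactly one dot on each of the n diagonals x+y = c for (n+3)/2 ≤ c ≤ (3n+1)/2. -/
open Finset

/-- If each value in an interval of length `n` is hit exactly once, then the
image is exactly the interval. -/
lemma image_eq_Icc_aux {n : ℕ} {a : ℤ} {S : Finset (ℤ × ℤ)} {g : ℤ × ℤ → ℤ}
    (hcard : S.card = n)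
    (h : ∀ k ∈ Finset.Icc a (a + n - 1), ∃! p, p ∈ S ∧ g p = k) :
    S.image g = Finset.Icc a (a + n - 1) := by
  have hIcc : (Finset.Icc a (a + n - 1)).card = n := by
    rw [Int.card_Icc]; omega
  refine (Finset.eq_of_subset_of_card_le ?_ ?_).symm
  · intro k hk
    obtain ⟨p, ⟨hp, hgp⟩, -⟩ := h k hk
    exact Finset.mem_image.mpr ⟨p, hp, hgp⟩
  · rw [hIcc]; exact hcard ▸ Finset.card_image_le

lemma two_sum_Icc_aux : ∀ n : ℕ, 2 * ∑ j ∈ Finset.Icc (0:ℤ) ((n:ℤ) - 1), j = n * (n - 1) := by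
  intro n
  induction n with
  | zero => simp
  | succ m ih =>
    have h1 : ((m + 1 : ℕ) : ℤ) - 1 = (m : ℤ) := by push_cast; ring
    have h2 : Finset.Icc (0:ℤ) (m:ℤ) = insert (m:ℤ) (Finset.Icc (0:ℤ) ((m:ℤ) - 1)) := by
      ext x; simp [Finset.mem_Icc]; omega
    have h3 : (m:ℤ) ∉ Finset.Icc (0:ℤ) ((m:ℤ) - 1) := by simp
    rw [h1, h2, Finset.sum_insert h3]
    push_cast
    push_cast at ih
    ring_nf
    ring_nf at ih
    linarith

lemma sum_Icc_shift_aux (n : ℕ) (c : ℤ) :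
    ∑ k ∈ Finset.Icc c (c + n - 1), k
      = n * c + ∑ j ∈ Finset.Icc (0:ℤ) ((n:ℤ) - 1), j := by
  have hmap : Finset.Icc c (c + (n:ℤ) - 1)
      = Finset.map (addLeftEmbedding c) (Finset.Icc (0:ℤ) ((n:ℤ) - 1)) := by
    rw [Finset.map_add_left_Icc]
    congr 1 <;> ring
  rw [hmap, Finset.sum_map]
  simp only [addLeftEmbedding_apply]
  rw [Finset.sum_add_distrib, Finset.sum_const, Int.card_Icc]
  have : ((n:ℤ) - 1 + 1 - 0).toNat = n := by omega
  rw [this, nsmul_eq_mul]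

/-- If a honeycomb array with `n` dots exists then `n` is odd and, after a
translation, the dots form a Costas array of order `n` contained in
`S_{(n-1)/2}(n)`, with exactly one dot on each diagonal `x+y = k` for
`(n+3)/2 ≤ k ≤ (3n+1)/2`. -/
theorem honeycomb_structure (n : ℕ) (hn : 0 < n) (a b d : ℤ)
    (S : Finset (ℤ × ℤ)) (hcard : S.card = n)
    (hx : ∀ k ∈ Finset.Icc a (a + n - 1), ∃! p, p ∈ S ∧ p.1 = k)
    (hy : ∀ k ∈ Finset.Icc b (b + n - 1), ∃! p, p ∈ S ∧ p.2 = k)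
    (hd : ∀ k ∈ Finset.Icc d (d + n - 1), ∃! p, p ∈ S ∧ p.1 + p.2 = k)
    (hdiff : ∀ p ∈ S, ∀ q ∈ S, ∀ p' ∈ S, ∀ q' ∈ S,
      p ≠ q → p' ≠ q' → p - q = p' - q' → p = p' ∧ q = q') :
    Odd n ∧ ∃ t : ℤ × ℤ,
      (∀ k ∈ Finset.Icc (1 : ℤ) n, ∃! p, p ∈ S.image (· + t) ∧ p.1 = k) ∧
      (∀ k ∈ Finset.Icc (1 : ℤ) n, ∃! p, p ∈ S.image (· + t) ∧ p.2 = k) ∧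
      (∀ k : ℤ, (n : ℤ) + 3 ≤ 2 * k → 2 * k ≤ 3 * n + 1 →
        ∃! p, p ∈ S.image (· + t) ∧ p.1 + p.2 = k) ∧
      (∀ p ∈ S.image (· + t), 1 ≤ p.1 ∧ p.1 ≤ n ∧ 1 ≤ p.2 ∧ p.2 ≤ n ∧
        (n : ℤ) + 3 ≤ 2 * (p.1 + p.2) ∧ 2 * (p.1 + p.2) ≤ 3 * n + 1) ∧
      (∀ p ∈ S.image (· + t), ∀ q ∈ S.image (· + t),
        ∀ p' ∈ S.image (· + t), ∀ q' ∈ S.image (· + t),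
        p ≠ q → p' ≠ q' → p - q = p' - q' → p = p' ∧ q = q') := by
  classical
  have hxim : S.image (fun p => p.1) = Finset.Icc a (a + n - 1) := image_eq_Icc_aux hcard hx
  have hyim : S.image (fun p => p.2) = Finset.Icc b (b + n - 1) := image_eq_Icc_aux hcard hy
  have hdim : S.image (fun p => p.1 + p.2) = Finset.Icc d (d + n - 1) := image_eq_Icc_aux hcard hd
  have hmemx : ∀ p ∈ S, a ≤ p.1 ∧ p.1 ≤ a + n - 1 := by
    intro p hp
    have := hxim ▸ Finset.mem_image_of_mem (fun p : ℤ × ℤ => p.1) hp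
    simpa [Finset.mem_Icc] using this
  have hmemy : ∀ p ∈ S, b ≤ p.2 ∧ p.2 ≤ b + n - 1 := by
    intro p hp
    have := hyim ▸ Finset.mem_image_of_mem (fun p : ℤ × ℤ => p.2) hp
    simpa [Finset.mem_Icc] using this
  have hmemd : ∀ p ∈ S, d ≤ p.1 + p.2 ∧ p.1 + p.2 ≤ d + n - 1 := by
    intro p hp
    have := hdim ▸ Finset.mem_image_of_mem (fun p : ℤ × ℤ => p.1 + p.2) hp
    simpa [Finset.mem_Icc] using this
  -- injectivity on coordinates
  have injx : ∀ p ∈ S, ∀ q ∈ S, p.1 = q.1 → p = q := by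
    intro p hp q hq hpq
    have hk : p.1 ∈ Finset.Icc a (a + n - 1) := Finset.mem_Icc.mpr (hmemx p hp)
    obtain ⟨r, -, hu⟩ := hx p.1 hk
    rw [hu p ⟨hp, rfl⟩, hu q ⟨hq, hpq.symm⟩]
  have injy : ∀ p ∈ S, ∀ q ∈ S, p.2 = q.2 → p = q := by
    intro p hp q hq hpq
    have hk : p.2 ∈ Finset.Icc b (b + n - 1) := Finset.mem_Icc.mpr (hmemy p hp)
    obtain ⟨r, -, hu⟩ := hy p.2 hk
    rw [hu p ⟨hp, rfl⟩, hu q ⟨hq, hpq.symm⟩]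
  have injd : ∀ p ∈ S, ∀ q ∈ S, p.1 + p.2 = q.1 + q.2 → p = q := by
    intro p hp q hq hpq
    have hk : p.1 + p.2 ∈ Finset.Icc d (d + n - 1) := Finset.mem_Icc.mpr (hmemd p hp)
    obtain ⟨r, -, hu⟩ := hd (p.1 + p.2) hk
    rw [hu p ⟨hp, rfl⟩, hu q ⟨hq, hpq.symm⟩]
  -- sums
  have sumx : ∑ p ∈ S, p.1 = ∑ k ∈ Finset.Icc a (a + n - 1), k := by
    rw [← hxim, Finset.sum_image injx]
  have sumy : ∑ p ∈ S, p.2 = ∑ k ∈ Finset.Icc b (b + n - 1), k := by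
    rw [← hyim, Finset.sum_image injy]
  have sumd : ∑ p ∈ S, (p.1 + p.2) = ∑ k ∈ Finset.Icc d (d + n - 1), k := by
    rw [← hdim, Finset.sum_image injd]
  have hsplit : ∑ p ∈ S, (p.1 + p.2) = ∑ p ∈ S, p.1 + ∑ p ∈ S, p.2 :=
    Finset.sum_add_distrib
  have heq : (n:ℤ) * d = n * a + n * b
      + ∑ j ∈ Finset.Icc (0:ℤ) ((n:ℤ) - 1), j := by
    have := hsplit
    rw [sumx, sumy, sumd] at this
    rw [sum_Icc_shift_aux, sum_Icc_shift_aux, sum_Icc_shift_aux] at this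
    linarith
  have hgauss := two_sum_Icc_aux n
  have hne : (n:ℤ) ≠ 0 := by exact_mod_cast hn.ne'
  have hkey : 2 * d = 2 * a + 2 * b + ((n:ℤ) - 1) := by
    have h2 : (n:ℤ) * (2 * d) = (n:ℤ) * (2 * a + 2 * b + ((n:ℤ) - 1)) := by
      ring_nf
      ring_nf at heq hgauss
      linarith
    exact mul_left_cancel₀ hne h2
  have hodd : Odd n := by
    have : Odd (n:ℤ) := ⟨d - a - b, by linarith⟩
    exact_mod_cast this
  refine ⟨hodd, (1 - a, 1 - b), ?_, ?_, ?_, ?_, ?_⟩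
  · -- columns
    intro k hk
    rw [Finset.mem_Icc] at hk
    have hk' : k + a - 1 ∈ Finset.Icc a (a + n - 1) := Finset.mem_Icc.mpr (by omega)
    obtain ⟨q, ⟨hqS, hq1⟩, hu⟩ := hx _ hk'
    refine ⟨q + (1 - a, 1 - b), ⟨Finset.mem_image_of_mem _ hqS, by
      simp [Prod.fst_add]; omega⟩, ?_⟩
    rintro p ⟨hpmem, hp1⟩
    obtain ⟨q', hq'S, rfl⟩ := Finset.mem_image.mp hpmem
    have hq'1 : q'.1 = k + a - 1 := by
      simp [Prod.fst_add] at hp1; omega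
    rw [hu q' ⟨hq'S, hq'1⟩]
  · -- rows
    intro k hk
    rw [Finset.mem_Icc] at hk
    have hk' : k + b - 1 ∈ Finset.Icc b (b + n - 1) := Finset.mem_Icc.mpr (by omega)
    obtain ⟨q, ⟨hqS, hq2⟩, hu⟩ := hy _ hk'
    refine ⟨q + (1 - a, 1 - b), ⟨Finset.mem_image_of_mem _ hqS, by
      simp [Prod.snd_add]; omega⟩, ?_⟩
    rintro p ⟨hpmem, hp2⟩
    obtain ⟨q', hq'S, rfl⟩ := Finset.mem_image.mp hpmem
    have hq'2 : q'.2 = k + b - 1 := by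
      simp [Prod.snd_add] at hp2; omega
    rw [hu q' ⟨hq'S, hq'2⟩]
  · -- diagonals
    intro k hk1 hk2
    have hk' : k - 2 + a + b ∈ Finset.Icc d (d + n - 1) := Finset.mem_Icc.mpr (by omega)
    obtain ⟨q, ⟨hqS, hqd⟩, hu⟩ := hd _ hk'
    refine ⟨q + (1 - a, 1 - b), ⟨Finset.mem_image_of_mem _ hqS, by
      simp [Prod.fst_add, Prod.snd_add]; omega⟩, ?_⟩
    rintro p ⟨hpmem, hpd⟩
    obtain ⟨q', hq'S, rfl⟩ := Finset.mem_image.mp hpmem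
    have hq'd : q'.1 + q'.2 = k - 2 + a + b := by
      simp [Prod.fst_add, Prod.snd_add] at hpd; omega
    rw [hu q' ⟨hq'S, hq'd⟩]
  · -- bounds
    intro p hp
    obtain ⟨q, hqS, rfl⟩ := Finset.mem_image.mp hp
    have h1 := hmemx q hqS
    have h2 := hmemy q hqS
    have h3 := hmemd q hqS
    simp only [Prod.fst_add, Prod.snd_add]
    constructor
    · omega
    constructor
    · omega
    constructor
    · omega
    constructor
    · omega
    constructor
    · omega
    · omega
  · -- differences
    intro p hp q hq p' hp' q' hq' hpq hpq' hsub
    obtain ⟨P, hP, rfl⟩ := Finset.mem_image.mp hp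
    obtain ⟨Q, hQ, rfl⟩ := Finset.mem_image.mp hq
    obtain ⟨P', hP', rfl⟩ := Finset.mem_image.mp hp'
    obtain ⟨Q', hQ', rfl⟩ := Finset.mem_image.mp hq'
    have hPQ : P ≠ Q := fun h => hpq (by rw [h])
    have hPQ' : P' ≠ Q' := fun h => hpq' (by rw [h])
    have hsub' : P - Q = P' - Q' := by
      have : P + (1 - a, 1 - b) - (Q + (1 - a, 1 - b)) = P - Q := by abel
      have h2 : P' + (1 - a, 1 - b) - (Q' + (1 - a, 1 - b)) = P' - Q' := by abel
      rw [← this, ← h2]; exact hsub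
    obtain ⟨e1, e2⟩ := hdiff P hP Q hQ P' hP' Q' hQ' hPQ hPQ' hsub'
    exact ⟨by rw [e1], by rw [e2]⟩
end
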